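/- Let u, v ≥ 1 and N ≥ 0 be integers with u + v ≤ N. Then there exists a polynomial P ∈ ℚ[T] such that for every real number t with 0 ≤ t < 1 one has ∫₀¹ x^{u−1}(1−x)^{v−1}/(1−tx)^N dx = P(t)/(1−t)^{N−v}. -/

import Mathlib

open MeasureTheory

-- Beta-type integral with explicit rational value
lemma betaAux (m n : ℕ) : (∫ x in Set.Ioo (0:ℝ) 1, x ^ m * (1 - x) ^ n)
    = ∑ j ∈ Finset.range (n+1), (-1:ℝ)^j * (n.choose j) / (m+j+1) := by
  rw [← integral_Ioc_eq_integral_Ioo, ← intervalIntegral.integral_of_le zero_le_one]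
  have hpt : ∀ x : ℝ, x ^ m * (1 - x) ^ n
      = ∑ j ∈ Finset.range (n+1), ((-1:ℝ)^j * (n.choose j)) * x ^ (m+j) := by
    intro x
    rw [sub_eq_add_neg, add_comm, add_pow, Finset.mul_sum]
    refine Finset.sum_congr rfl fun j hj => ?_
    rw [neg_pow, pow_add]
    ring
  rw [intervalIntegral.integral_congr (fun x _ => hpt x),
    intervalIntegral.integral_finset_sum
      (fun j _ => (Continuous.intervalIntegrable (by continuity) _ _))]
  refine Finset.sum_congr rfl fun j hj => ?_
  rw [intervalIntegral.integral_const_mul, integral_pow]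
  push_cast
  simp only [div_eq_mul_inv]
  ring

set_option maxHeartbeats 1000000 in
theorem stmt12 (u v N : ℕ) (hu : 1 ≤ u) (hv : 1 ≤ v) (huv : u + v ≤ N) :
    ∃ P : Polynomial ℚ, ∀ t : ℝ, 0 ≤ t → t < 1 →
      (∫ x in Set.Ioo (0 : ℝ) 1, x ^ (u - 1) * (1 - x) ^ (v - 1) / (1 - t * x) ^ N)
        = Polynomial.aeval t P / (1 - t) ^ (N - v) := by
  obtain ⟨a, rfl⟩ : ∃ a, u = a + 1 := ⟨u - 1, by omega⟩
  obtain ⟨b, rfl⟩ : ∃ b, v = b + 1 := ⟨v - 1, by omega⟩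
  obtain ⟨M, rfl⟩ : ∃ M, N = M + (a + 1) + (b + 1) := ⟨N - (a+1) - (b+1), by omega⟩
  have hNv : M + (a + 1) + (b + 1) - (b + 1) = M + a + 1 := by omega
  refine ⟨∑ k ∈ Finset.range (M+1), Polynomial.C
      ((-1:ℚ)^k * (M.choose k) *
        ∑ j ∈ Finset.range (a+1), (-1:ℚ)^j * (a.choose j) / (b+k+j+1)) * Polynomial.X ^ k,
    fun t ht0 ht1 => ?_⟩
  simp only [Nat.add_sub_cancel, hNv]
  have hs : (0:ℝ) < 1 - t := by linarith
  have hden : ∀ y : ℝ, y ∈ Set.Ioo (0:ℝ) 1 → (0:ℝ) < 1 - t * y := by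
    rintro y ⟨hy0, hy1⟩; nlinarith
  set f : ℝ → ℝ := fun y => (1 - y) / (1 - t * y) with hf
  have hmem : ∀ y ∈ Set.Ioo (0:ℝ) 1, f y ∈ Set.Ioo (0:ℝ) 1 := by
    rintro y ⟨hy0, hy1⟩
    have h1 : (0:ℝ) < 1 - t * y := hden y ⟨hy0, hy1⟩
    constructor
    · exact div_pos (by linarith) h1
    · rw [div_lt_one h1]; nlinarith
  have himg : f '' Set.Ioo (0:ℝ) 1 = Set.Ioo (0:ℝ) 1 := by
    apply Set.Subset.antisymm
    · rintro x ⟨y, hy, rfl⟩; exact hmem y hy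
    · rintro x hx
      refine ⟨f x, hmem x hx, ?_⟩
      obtain ⟨hx0, hx1⟩ := hx
      have h1 : (0:ℝ) < 1 - t * x := hden x ⟨hx0, hx1⟩
      have h2 : (1:ℝ) - t * ((1 - x) / (1 - t * x)) = (1 - t) / (1 - t * x) := by
        field_simp; ring
      have h3 : (1:ℝ) - (1 - x) / (1 - t * x) = x * (1 - t) / (1 - t * x) := by
        rw [eq_div_iff h1.ne', sub_mul, div_mul_cancel₀ _ h1.ne']; ring
      show (1 - f x) / (1 - t * f x) = x
      rw [hf]; simp only
      rw [h2, h3, div_div_div_eq, div_eq_iff (by positivity)]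
      ring
  have hinj : Set.InjOn f (Set.Ioo (0:ℝ) 1) := by
    rintro y1 h1 y2 h2 heq
    have d1 := hden y1 h1
    have d2 := hden y2 h2
    rw [hf] at heq; simp only at heq
    rw [div_eq_div_iff (ne_of_gt d1) (ne_of_gt d2)] at heq
    have : (1 - t) * (y1 - y2) = 0 := by linear_combination -heq
    rcases mul_eq_zero.mp this with h | h
    · linarith
    · linarith
  have hderiv : ∀ y ∈ Set.Ioo (0:ℝ) 1,
      HasDerivWithinAt f ((t - 1) / (1 - t * y)^2) (Set.Ioo (0:ℝ) 1) y := by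
    intro y hy
    have h1 : (0:ℝ) < 1 - t * y := hden y hy
    have hnum : HasDerivAt (fun y : ℝ => 1 - y) (-1) y := by
      simpa using (hasDerivAt_id y).const_sub (1:ℝ)
    have hd : HasDerivAt (fun y : ℝ => 1 - t * y) (-t) y := by
      simpa using ((hasDerivAt_id y).const_mul t).const_sub (1:ℝ)
    have := hnum.div hd (ne_of_gt h1)
    refine HasDerivAt.hasDerivWithinAt ?_
    refine this.congr_deriv ?_
    ring
  have key := integral_image_eq_integral_abs_deriv_smul measurableSet_Ioo hderiv hinj
    (fun x => x ^ a * (1 - x) ^ b / (1 - t * x) ^ (M + (a+1) + (b+1)))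
  rw [himg] at key
  rw [key]
  have hpt : ∀ y ∈ Set.Ioo (0:ℝ) 1,
      |(t - 1) / (1 - t * y)^2| • (f y ^ a * (1 - f y) ^ b / (1 - t * f y) ^ (M + (a+1) + (b+1)))
      = (y ^ b * (1 - y) ^ a * (1 - t * y) ^ M) / (1 - t) ^ (M + a + 1) := by
    rintro y hy
    obtain ⟨hy0, hy1⟩ := hy
    have h1 : (0:ℝ) < 1 - t * y := hden y ⟨hy0, hy1⟩
    have habs : |(t - 1) / (1 - t * y)^2| = (1 - t) / (1 - t * y)^2 := by
      rw [abs_div, abs_of_neg (by linarith : t - 1 < 0), abs_of_pos (by positivity)]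
      ring
    have h2 : (1:ℝ) - t * f y = (1 - t) / (1 - t * y) := by
      rw [hf]; simp only; field_simp; ring
    have h3 : (1:ℝ) - f y = y * (1 - t) / (1 - t * y) := by
      rw [hf]; simp only; rw [eq_div_iff h1.ne', sub_mul, div_mul_cancel₀ _ h1.ne']; ring
    rw [smul_eq_mul, habs, h2, h3, hf]
    simp only [div_pow, mul_pow]
    rw [eq_div_iff (by positivity)]
    have e1 : ((1:ℝ) - t * y) ≠ 0 := ne_of_gt h1
    have e2 : ((1:ℝ) - t) ≠ 0 := ne_of_gt hs
    field_simp
    ring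
  rw [setIntegral_congr_fun measurableSet_Ioo hpt]
  simp_rw [div_eq_mul_inv, integral_mul_const]
  rw [← div_eq_mul_inv]
  congr 1
  have hexp : ∀ y : ℝ, y ^ b * (1 - y) ^ a * (1 - t * y) ^ M
      = ∑ k ∈ Finset.range (M+1), ((-1:ℝ)^k * (M.choose k) * t^k) * (y ^ (b+k) * (1 - y) ^ a) := by
    intro y
    rw [show ((1:ℝ) - t * y) = -(t * y) + 1 by ring, add_pow, Finset.mul_sum]
    refine Finset.sum_congr rfl fun k hk => ?_
    rw [neg_pow, mul_pow, pow_add]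
    ring
  rw [setIntegral_congr_fun measurableSet_Ioo (fun y _ => hexp y),
    integral_finset_sum _ (fun k _ =>
      ((Continuous.integrableOn_Icc (by continuity)).mono_set Set.Ioo_subset_Icc_self)),
    map_sum]
  refine Finset.sum_congr rfl fun k hk => ?_
  rw [integral_const_mul, betaAux (b+k) a, map_mul, Polynomial.aeval_C, map_pow,
    Polynomial.aeval_X]
  push_cast
  simp only [div_eq_mul_inv]
  ring
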